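/- arXiv:1806.10884 — 3 statements merged into one kernel-verified Lean document; each statement's English description precedes it below -/
import Mathlib

section
/- The Fourier coefficients u_α^{(k)} of P_k(z) = Π_{j=1}^k (1/m_j) Θ_j(z) conj(Θ_j(z)) satisfy 0 ≤ u_α^{(1)} ≤ u_α^{(2)} ≤ ⋯ ≤ 1 for every integer α; that is, for each fixed α the sequence k ↦ u_α^{(k)} is nonnegative, nondecreasing in k, and bounded above by 1. -/
open MeasureTheory Finset Filter Topology

/-- `h_k`: `h_0 = 1`, `h_k = m_k h_{k-1} + ∑_{i=0}^{m_k-2} a_k^i`. -/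
def hgt (m : ℕ → ℕ) (a : ℕ → ℕ → ℕ) : ℕ → ℕ
  | 0 => 1
  | k + 1 => m (k + 1) * hgt m a k + ∑ i ∈ Finset.range (m (k + 1) - 1), a (k + 1) i

/-- The normalized Lebesgue measure `dż` on the unit circle `S¹ ⊆ ℂ`. -/
noncomputable def circleMeasure : Measure ℂ :=
  Measure.map (fun t : ℝ => Complex.exp (2 * Real.pi * Complex.I * t))
    (volume.restrict (Set.Ico (0 : ℝ) 1))

/-- `Θ_j(z) = ∑_{p=0}^{m_j-1} z^{p h_{j-1} + ∑_{i<p} a_j^i}`. -/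
noncomputable def ThetaC (m : ℕ → ℕ) (a : ℕ → ℕ → ℕ) (j : ℕ) (z : ℂ) : ℂ :=
  ∑ p ∈ Finset.range (m j), z ^ (p * hgt m a (j - 1) + ∑ i ∈ Finset.range p, a j i)

/-- `T_j(z) = (1/m_j) Θ_j(z) conj(Θ_j(z))`. -/
noncomputable def TTj (m : ℕ → ℕ) (a : ℕ → ℕ → ℕ) (j : ℕ) (z : ℂ) : ℂ :=
  (m j : ℂ)⁻¹ * ThetaC m a j z * (starRingEnd ℂ) (ThetaC m a j z)

/-- The `n`-th Fourier coefficient `∫_{S¹} z^{-n} f(z) dż` of a function on the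
circle. -/
noncomputable def fCoeff (f : ℂ → ℂ) (n : ℤ) : ℂ :=
  ∫ z, z ^ (-n) * f z ∂circleMeasure

/-- `P_k(z) = ∏_{j=1}^k (1/m_j) Θ_j(z) conj(Θ_j(z))`. -/
noncomputable def PC (m : ℕ → ℕ) (a : ℕ → ℕ → ℕ) (k : ℕ) (z : ℂ) : ℂ :=
  ∏ j ∈ Finset.Icc 1 k, TTj m a j z

namespace RP

noncomputable def EC (t : ℝ) : ℂ := Complex.exp (2 * Real.pi * Complex.I * t)

lemma EC_ne_zero (t : ℝ) : EC t ≠ 0 := Complex.exp_ne_zero _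

lemma EC_cont : Continuous EC :=
  (continuous_const.mul Complex.continuous_ofReal).cexp

lemma EC_zpow (n : ℤ) (t : ℝ) :
    EC t ^ n = Complex.exp ((2 * Real.pi * Complex.I * n) * t) := by
  unfold EC; rw [← Complex.exp_int_mul]; ring_nf

lemma EC_abs (t : ℝ) : ‖EC t‖ = 1 := by
  unfold EC; rw [Complex.norm_exp]; norm_num [Complex.mul_re]

lemma EC_conj (t : ℝ) : (starRingEnd ℂ) (EC t) = (EC t)⁻¹ := by
  unfold EC
  rw [← Complex.exp_conj, ← Complex.exp_neg]
  congr 1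
  simp only [map_mul, Complex.conj_I, Complex.conj_ofReal, map_ofNat]
  ring

lemma cont_zpowEC (n : ℤ) : Continuous fun t : ℝ => EC t ^ n := by
  have h : (fun t : ℝ => EC t ^ n)
      = fun t : ℝ => Complex.exp ((2 * Real.pi * Complex.I * n) * t) :=
    funext (EC_zpow n)
  rw [h]
  exact (continuous_const.mul Complex.continuous_ofReal).cexp

variable (m : ℕ → ℕ) (a : ℕ → ℕ → ℕ)

def ee (j p : ℕ) : ℕ := p * hgt m a (j - 1) + ∑ i ∈ Finset.range p, a j i

noncomputable def cc : ℕ → ℤ → ℝ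
  | 0, n => if n = 0 then 1 else 0
  | k+1, n => (m (k+1) : ℝ)⁻¹ *
      ∑ pq ∈ Finset.range (m (k+1)) ×ˢ Finset.range (m (k+1)),
        cc k (n - ((ee m a (k+1) pq.1 : ℤ) - (ee m a (k+1) pq.2 : ℤ)))

variable {m a}
variable (hm : ∀ j, 1 ≤ j → 2 ≤ m j) (ha : ∀ j i, 1 ≤ a j i)

lemma cc_nonneg : ∀ k n, 0 ≤ cc m a k n
  | 0, n => by unfold cc; positivity
  | k+1, n => by
    unfold cc
    exact mul_nonneg (by positivity) (Finset.sum_nonneg fun pq _ => cc_nonneg k _)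

lemma ee_succ (j p : ℕ) : ee m a j (p+1) = ee m a j p + (hgt m a (j-1) + a j p) := by
  unfold ee; rw [Finset.sum_range_succ]; ring

include ha in
lemma ee_gap (j : ℕ) {p q : ℕ} (h : p < q) :
    (ee m a j p : ℤ) + hgt m a (j-1) + 1 ≤ ee m a j q := by
  induction q with
  | zero => omega
  | succ q ih =>
    rcases Nat.lt_succ_iff_lt_or_eq.mp h with h' | h'
    · have := ih h'
      have h2 := ee_succ (m := m) (a := a) j q
      have := ha j q
      push_cast [h2]
      omega
    · subst h'
      have h2 := ee_succ (m := m) (a := a) j p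
      have := ha j p
      push_cast [h2]
      omega

include ha in
lemma ee_mono (j : ℕ) {p q : ℕ} (h : p ≤ q) : (ee m a j p : ℤ) ≤ ee m a j q := by
  rcases eq_or_lt_of_le h with h' | h'
  · subst h'; exact le_refl _
  · have h1 := ee_gap (m := m) ha j h'
    have h2 : (0:ℤ) ≤ hgt m a (j-1) := Int.ofNat_nonneg _
    omega

include hm ha in
lemma ee_le (k : ℕ) {p : ℕ} (hp : p < m (k+1)) :
    (ee m a (k+1) p : ℤ) ≤ (hgt m a (k+1) : ℤ) - hgt m a k := by
  have h2 : 2 ≤ m (k+1) := hm (k+1) (by omega)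
  have hmono := ee_mono (m := m) (a := a) ha (k+1) (show p ≤ m (k+1) - 1 by omega)
  refine hmono.trans ?_
  have hs : (hgt m a (k+1) : ℤ)
      = m (k+1) * hgt m a k + ∑ i ∈ Finset.range (m (k+1) - 1), (a (k+1) i : ℤ) := by
    rw [show hgt m a (k+1) = m (k+1) * hgt m a k
      + ∑ i ∈ Finset.range (m (k+1) - 1), a (k+1) i from rfl]
    push_cast; ring
  have he : (ee m a (k+1) (m (k+1) - 1) : ℤ)
      = ((m (k+1) : ℤ) - 1) * hgt m a k + ∑ i ∈ Finset.range (m (k+1) - 1), (a (k+1) i : ℤ) := by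
    unfold ee
    simp only [Nat.add_sub_cancel]
    push_cast [Nat.cast_sub (show 1 ≤ m (k+1) by omega)]
    ring
  rw [he, hs]; ring_nf
  exact le_refl _

include ha in
lemma ee_offdiag (j : ℕ) {p q : ℕ} (h : p ≠ q) :
    (hgt m a (j-1) : ℤ) ≤ |(ee m a j p : ℤ) - (ee m a j q : ℤ)| := by
  rcases Nat.lt_or_ge p q with h' | h'
  · have := ee_gap (m := m) ha j h'
    rw [abs_sub_comm]
    rw [abs_of_nonneg (by omega)]
    omega
  · have h'' : q < p := by omega
    have := ee_gap (m := m) ha j h''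
    rw [abs_of_nonneg (by omega)]
    omega

include hm ha in
lemma cc_support : ∀ k (n : ℤ), (hgt m a k : ℤ) ≤ |n| → cc m a k n = 0
  | 0, n, h => by
    unfold cc hgt at *
    simp only [Nat.cast_one] at h
    have : n ≠ 0 := by rcases abs_cases n with ⟨h1,h2⟩|⟨h1,h2⟩ <;> omega
    simp [this]
  | k+1, n, h => by
    unfold cc
    rw [Finset.sum_congr rfl (fun pq hpq => ?_), Finset.sum_const, smul_zero, mul_zero]
    simp only [Finset.mem_product, Finset.mem_range] at hpq
    have h1 := ee_le hm ha k hpq.1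
    have h2 := ee_le hm ha k hpq.2
    have h1' : (0:ℤ) ≤ ee m a (k+1) pq.1 := Int.ofNat_nonneg _
    have h2' : (0:ℤ) ≤ ee m a (k+1) pq.2 := Int.ofNat_nonneg _
    have hhk : (hgt m a k : ℤ) ≤ hgt m a (k+1) := by
      have : (0:ℤ) ≤ ee m a (k+1) 0 := Int.ofNat_nonneg _
      have := ee_le hm ha k (show 0 < m (k+1) by have := hm (k+1) (by omega); omega)
      omega
    apply cc_support k
    rcases abs_cases n with ⟨e1,e2⟩|⟨e1,e2⟩ <;>
      rcases abs_cases (n - ((ee m a (k+1) pq.1 : ℤ) - (ee m a (k+1) pq.2 : ℤ))) with ⟨f1,f2⟩|⟨f1,f2⟩ <;>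
      omega

include hm ha in
lemma cc_zero : ∀ k, cc m a k 0 = 1
  | 0 => by unfold cc; simp
  | k+1 => by
    have hm1 : (m (k+1) : ℝ) ≠ 0 := by
      have := hm (k+1) (by omega); positivity
    unfold cc
    rw [Finset.sum_congr rfl (fun pq hpq => show
        cc m a k (0 - ((ee m a (k+1) pq.1 : ℤ) - (ee m a (k+1) pq.2 : ℤ)))
          = if pq.1 = pq.2 then 1 else 0 from ?_)]
    · rw [Finset.sum_product]
      have : ∀ p ∈ Finset.range (m (k+1)),
          (∑ q ∈ Finset.range (m (k+1)), if p = q then (1:ℝ) else 0) = 1 := by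
        intro p hp
        rw [Finset.sum_ite_eq]
        simp [Finset.mem_range.mp hp]
      rw [Finset.sum_congr rfl this, Finset.sum_const, Finset.card_range]
      simp [hm1]
    · by_cases hd : pq.1 = pq.2
      · simp only [hd, if_true, sub_self, zero_sub, neg_zero]
        simpa using cc_zero k
      · rw [if_neg hd]
        apply cc_support hm ha k
        have := ee_offdiag (m := m) ha (k+1) hd
        simp only [Nat.add_sub_cancel] at this
        rw [zero_sub, abs_neg]
        exact this

include hm in
lemma cc_mono (k : ℕ) (n : ℤ) : cc m a k n ≤ cc m a (k+1) n := by
  have hm2 := hm (k+1) (by omega)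
  have hm1 : (0:ℝ) < (m (k+1) : ℝ) := by positivity
  conv_rhs => unfold cc
  have hb : (m (k+1) : ℝ) * cc m a k n ≤
      ∑ pq ∈ Finset.range (m (k+1)) ×ˢ Finset.range (m (k+1)),
        cc m a k (n - ((ee m a (k+1) pq.1 : ℤ) - (ee m a (k+1) pq.2 : ℤ))) := by
    have : ∀ pq ∈ Finset.range (m (k+1)) ×ˢ Finset.range (m (k+1)),
        (if pq.1 = pq.2 then cc m a k n else 0) ≤
          cc m a k (n - ((ee m a (k+1) pq.1 : ℤ) - (ee m a (k+1) pq.2 : ℤ))) := by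
      intro pq _
      by_cases hd : pq.1 = pq.2
      · simp [hd]
      · rw [if_neg hd]; exact cc_nonneg _ _
    refine le_trans (le_of_eq ?_) (Finset.sum_le_sum this)
    rw [Finset.sum_product]
    have : ∀ p ∈ Finset.range (m (k+1)),
        (∑ q ∈ Finset.range (m (k+1)), if p = q then cc m a k n else 0) = cc m a k n := by
      intro p hp
      rw [Finset.sum_ite_eq]
      simp [Finset.mem_range.mp hp]
    rw [Finset.sum_congr rfl this, Finset.sum_const, Finset.card_range]
    simp [mul_comm]
  calc cc m a k n = (m (k+1) : ℝ)⁻¹ * ((m (k+1):ℝ) * cc m a k n) := by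
        field_simp
    _ ≤ _ := by
        exact mul_le_mul_of_nonneg_left hb (by positivity)


variable (m a)

lemma cont_Theta (j : ℕ) : Continuous (ThetaC m a j) := by
  unfold ThetaC
  exact continuous_finset_sum _ fun p _ => continuous_pow _

lemma cont_TT (j : ℕ) : Continuous (TTj m a j) := by
  unfold TTj
  exact (continuous_const.mul (cont_Theta m a j)).mul
    (Complex.continuous_conj.comp (cont_Theta m a j))

lemma cont_PC (k : ℕ) : Continuous (PC m a k) := by
  unfold PC
  exact continuous_finset_prod _ fun j _ => cont_TT m a j

lemma measurable_zpowC (n : ℤ) : Measurable fun z : ℂ => z ^ n := by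
  cases n with
  | ofNat l => simpa using measurable_id.pow_const l
  | negSucc l =>
    simp only [zpow_negSucc]
    exact (measurable_id.pow_const (l + 1)).inv

lemma fCoeff_eq (f : ℂ → ℂ) (hf : Measurable f) (α : ℤ) :
    fCoeff f α = ∫ t in Set.Ico (0:ℝ) 1, EC t ^ (-α) * f (EC t) := by
  unfold fCoeff circleMeasure
  rw [show (fun t : ℝ => Complex.exp (2 * Real.pi * Complex.I * (t:ℂ))) = EC from rfl]
  rw [integral_map (f := fun z : ℂ => z ^ (-α) * f z) EC_cont.measurable.aemeasurable
    ((measurable_zpowC (-α)).mul hf).aestronglyMeasurable]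

lemma orth (n : ℤ) :
    ∫ t in Set.Ico (0:ℝ) 1, Complex.exp ((2 * Real.pi * Complex.I * n) * t)
      = if n = 0 then 1 else 0 := by
  split_ifs with h
  · subst h; simp
  · rw [MeasureTheory.integral_Ico_eq_integral_Ioo, ← MeasureTheory.integral_Ioc_eq_integral_Ioo,
      ← intervalIntegral.integral_of_le zero_le_one,
      integral_exp_mul_complex (by simp [Real.pi_ne_zero, Complex.I_ne_zero, h])]
    norm_num
    rw [mul_comm ((2:ℂ) * Real.pi * Complex.I) (n:ℂ)]
    rw [Complex.exp_int_mul_two_pi_mul_I]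
    exact Or.inl (by norm_num)

lemma integrableOn_aux {F : Type*} [NormedAddCommGroup F] (g : ℝ → F)
    (hg : Continuous g) : IntegrableOn g (Set.Ico (0:ℝ) 1) :=
  (hg.integrableOn_Icc).mono_set Set.Ico_subset_Icc_self

lemma integrable_term (n : ℤ) (k : ℕ) :
    IntegrableOn (fun t => EC t ^ n * PC m a k (EC t)) (Set.Ico (0:ℝ) 1) :=
  integrableOn_aux _ ((cont_zpowEC n).mul ((cont_PC m a k).comp EC_cont))

lemma term_eq (n : ℤ) (k : ℕ) :
    ∫ t in Set.Ico (0:ℝ) 1, EC t ^ n * PC m a k (EC t) = fCoeff (PC m a k) (-n) := by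
  rw [fCoeff_eq _ (cont_PC m a k).measurable, neg_neg]

lemma Theta_eq (j : ℕ) (t : ℝ) :
    ThetaC m a j (EC t) = ∑ p ∈ Finset.range (m j), EC t ^ (ee m a j p : ℤ) := by
  unfold ThetaC ee
  exact Finset.sum_congr rfl fun p _ => (zpow_natCast _ _).symm

lemma TT_eq (j : ℕ) (t : ℝ) :
    TTj m a j (EC t) = (m j : ℂ)⁻¹ *
      ∑ pq ∈ Finset.range (m j) ×ˢ Finset.range (m j),
        EC t ^ ((ee m a j pq.1 : ℤ) - (ee m a j pq.2 : ℤ)) := by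
  unfold TTj
  rw [mul_assoc]
  congr 1
  rw [Theta_eq, map_sum]
  have hc : ∀ q ∈ Finset.range (m j), (starRingEnd ℂ) (EC t ^ (ee m a j q : ℤ))
      = EC t ^ (-(ee m a j q : ℤ)) := by
    intro q _
    rw [map_zpow₀, EC_conj, inv_zpow, ← zpow_neg]
  rw [Finset.sum_congr rfl hc, Finset.sum_mul_sum]
  rw [Finset.sum_product]
  refine Finset.sum_congr rfl fun p _ => Finset.sum_congr rfl fun q _ => ?_
  rw [← zpow_add₀ (EC_ne_zero t), sub_eq_add_neg]

lemma main : ∀ (k : ℕ) (α : ℤ), fCoeff (PC m a k) α = ((cc m a k α : ℝ) : ℂ)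
  | 0, α => by
    rw [fCoeff_eq _ (cont_PC m a 0).measurable]
    have h0 : PC m a 0 = fun _ => 1 := by funext z; unfold PC; simp
    rw [h0]
    simp only [mul_one, EC_zpow, Int.cast_neg]
    have := orth (-α)
    push_cast at this ⊢
    rw [this]
    unfold cc
    by_cases h : α = 0 <;> simp [h]
  | k+1, α => by
    rw [fCoeff_eq _ (cont_PC m a (k+1)).measurable]
    have hPC : ∀ z, PC m a (k+1) z = PC m a k z * TTj m a (k+1) z := fun z =>
      Finset.prod_Icc_succ_top (by omega) _
    have hfun : (fun t => EC t ^ (-α) * PC m a (k+1) (EC t)) =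
        fun t => ∑ pq ∈ Finset.range (m (k+1)) ×ˢ Finset.range (m (k+1)),
          (m (k+1) : ℂ)⁻¹ *
            (EC t ^ (-(α - ((ee m a (k+1) pq.1 : ℤ) - (ee m a (k+1) pq.2 : ℤ))))
              * PC m a k (EC t)) := by
      funext t
      rw [hPC, TT_eq]
      simp only [Finset.mul_sum, Finset.sum_mul]
      refine Finset.sum_congr rfl fun pq _ => ?_
      have he : -(α - ((ee m a (k+1) pq.1 : ℤ) - (ee m a (k+1) pq.2 : ℤ)))
          = -α + ((ee m a (k+1) pq.1 : ℤ) - (ee m a (k+1) pq.2 : ℤ)) := by ring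
      rw [he, zpow_add₀ (EC_ne_zero t)]
      ring
    rw [hfun, integral_finset_sum _ (fun pq _ =>
      ((integrable_term m a _ k).const_mul _))]
    have hterm : ∀ pq ∈ Finset.range (m (k+1)) ×ˢ Finset.range (m (k+1)),
        (∫ t in Set.Ico (0:ℝ) 1, (m (k+1) : ℂ)⁻¹ *
          (EC t ^ (-(α - ((ee m a (k+1) pq.1 : ℤ) - (ee m a (k+1) pq.2 : ℤ))))
            * PC m a k (EC t)))
        = (m (k+1) : ℂ)⁻¹ *
            ((cc m a k (α - ((ee m a (k+1) pq.1 : ℤ) - (ee m a (k+1) pq.2 : ℤ))) : ℝ) : ℂ) := by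
      intro pq _
      rw [MeasureTheory.integral_const_mul, term_eq, neg_neg, main k]
    rw [Finset.sum_congr rfl hterm]
    rw [show cc m a (k+1) α = (m (k+1) : ℝ)⁻¹ *
      ∑ pq ∈ Finset.range (m (k+1)) ×ˢ Finset.range (m (k+1)),
        cc m a k (α - ((ee m a (k+1) pq.1 : ℤ) - (ee m a (k+1) pq.2 : ℤ))) from rfl]
    push_cast
    rw [Finset.mul_sum]


lemma PC_ofReal (k : ℕ) (z : ℂ) :
    PC m a k z =
      ((∏ j ∈ Finset.Icc 1 k, (m j : ℝ)⁻¹ * Complex.normSq (ThetaC m a j z) : ℝ) : ℂ) := by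
  unfold PC TTj
  rw [Complex.ofReal_prod]
  refine Finset.prod_congr rfl fun j _ => ?_
  rw [mul_assoc, Complex.mul_conj]
  push_cast
  ring

lemma coeff_le_coeff_zero (k : ℕ) (α : ℤ) :
    (fCoeff (PC m a k) α).re ≤ (fCoeff (PC m a k) 0).re := by
  rw [fCoeff_eq _ (cont_PC m a k).measurable α, fCoeff_eq _ (cont_PC m a k).measurable 0]
  simp only [neg_zero, zpow_zero, one_mul]
  have h1 : (∫ t in Set.Ico (0:ℝ) 1, EC t ^ (-α) * PC m a k (EC t)).re
      = ∫ t in Set.Ico (0:ℝ) 1, (EC t ^ (-α) * PC m a k (EC t)).re :=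
    (Complex.reCLM.integral_comp_comm (integrable_term m a (-α) k)).symm
  have h2 : (∫ t in Set.Ico (0:ℝ) 1, PC m a k (EC t)).re
      = ∫ t in Set.Ico (0:ℝ) 1, (PC m a k (EC t)).re :=
    (Complex.reCLM.integral_comp_comm
      (integrableOn_aux _ ((cont_PC m a k).comp EC_cont))).symm
  rw [h1, h2]
  refine setIntegral_mono_on
    (integrableOn_aux _ (Complex.continuous_re.comp
      ((cont_zpowEC (-α)).mul ((cont_PC m a k).comp EC_cont))))
    (integrableOn_aux _ (Complex.continuous_re.comp ((cont_PC m a k).comp EC_cont)))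
    measurableSet_Ico (fun t _ => ?_)
  set R : ℝ := ∏ j ∈ Finset.Icc 1 k, (m j : ℝ)⁻¹ * Complex.normSq (ThetaC m a j (EC t)) with hRdef
  have hR0 : 0 ≤ R := Finset.prod_nonneg fun j _ =>
    mul_nonneg (by positivity) (Complex.normSq_nonneg _)
  have hPCR : PC m a k (EC t) = (R : ℂ) := PC_ofReal m a k (EC t)
  rw [hPCR]
  have hre : (EC t ^ (-α) * (R : ℂ)).re = (EC t ^ (-α)).re * R := by
    simp [Complex.mul_re]
  rw [hre, Complex.ofReal_re]
  have habs : (EC t ^ (-α)).re ≤ 1 := by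
    have h := (le_abs_self ((EC t ^ (-α)).re)).trans (Complex.abs_re_le_norm _)
    rwa [norm_zpow, EC_abs, one_zpow] at h
  exact mul_le_of_le_one_left hR0 habs

variable {m a} in
theorem final (hm : ∀ j, 1 ≤ j → 2 ≤ m j) (ha : ∀ j i, 1 ≤ a j i)
    (α : ℤ) (k : ℕ) :
    (fCoeff (PC m a k) α).im = 0 ∧
    0 ≤ (fCoeff (PC m a k) α).re ∧
    (fCoeff (PC m a k) α).re ≤ (fCoeff (PC m a (k + 1)) α).re ∧
    (fCoeff (PC m a k) α).re ≤ 1 := by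
  have hk := main m a k α
  have hk1 := main m a (k+1) α
  refine ⟨by rw [hk]; exact Complex.ofReal_im _, ?_, ?_, ?_⟩
  · rw [hk, Complex.ofReal_re]; exact cc_nonneg k α
  · rw [hk, hk1, Complex.ofReal_re, Complex.ofReal_re]
    exact cc_mono hm k α
  · refine (coeff_le_coeff_zero m a k α).trans ?_
    rw [main m a k 0, Complex.ofReal_re, cc_zero hm ha k]

end RP

/-- The Fourier coefficients `u_α^{(k)}` of `P_k` satisfy
`0 ≤ u_α^{(1)} ≤ u_α^{(2)} ≤ ⋯ ≤ 1`: for fixed `α` they are nonnegative reals,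
nondecreasing in `k`, and bounded above by `1`. -/
theorem PC_coeff_monotone (m : ℕ → ℕ) (a : ℕ → ℕ → ℕ)
    (hm : ∀ j, 1 ≤ j → 2 ≤ m j) (ha : ∀ j i, 1 ≤ a j i)
    (α : ℤ) (k : ℕ) (hk : 1 ≤ k) :
    (fCoeff (PC m a k) α).im = 0 ∧
    0 ≤ (fCoeff (PC m a k) α).re ∧
    (fCoeff (PC m a k) α).re ≤ (fCoeff (PC m a (k + 1)) α).re ∧
    (fCoeff (PC m a k) α).re ≤ 1 := by
  exact RP.final hm ha α k
end

section
/- For l < k, write Π_{j=l+1}^{k} (1/m_j) Θ_j(z) conj(Θ_j(z)) = Σ_α u_α^{(l:k)} z^α. Then u_α^{(l:k)} = 0 for all integers α with 0 < |α| < h_l. -/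
open MeasureTheory Finset Filter Topology

namespace MPG

noncomputable def χ (n : ℤ) (t : ℝ) : ℂ := Complex.exp (2 * Real.pi * Complex.I * n * t)

lemma χ_add (n m : ℤ) (t : ℝ) : χ (n + m) t = χ n t * χ m t := by
  rw [χ, χ, χ, ← Complex.exp_add]
  push_cast
  ring_nf

lemma χ_zpow (n : ℤ) (t : ℝ) :
    Complex.exp (2 * Real.pi * Complex.I * t) ^ n = χ n t := by
  rw [χ, ← Complex.exp_int_mul]
  ring_nf

lemma χ_conj (n : ℤ) (t : ℝ) : (starRingEnd ℂ) (χ n t) = χ (-n) t := by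
  rw [χ, χ, ← Complex.exp_conj]
  congr 1
  simp [Complex.ext_iff]

/-- orthogonality -/
lemma χ_integral (n : ℤ) :
    ∫ t in Set.Ico (0 : ℝ) 1, χ n t = if n = 0 then 1 else 0 := by
  rw [MeasureTheory.integral_Ico_eq_integral_Ioo,
    ← MeasureTheory.integral_Ioc_eq_integral_Ioo,
    ← intervalIntegral.integral_of_le (by norm_num : (0:ℝ) ≤ 1)]
  by_cases hn : n = 0
  · simp [hn, χ]
  · have hc : (2 * Real.pi * Complex.I * n : ℂ) ≠ 0 := by
      simp [Real.pi_ne_zero, Complex.I_ne_zero, hn]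
    rw [if_neg hn]
    have : ∀ t : ℝ, χ n t = Complex.exp ((2 * Real.pi * Complex.I * n) * t) := fun t => rfl
    simp_rw [this]
    rw [integral_exp_mul_complex hc]
    have h1 : (2 * Real.pi * Complex.I * n) * (1:ℝ) = (n : ℤ) * (2 * Real.pi * Complex.I) := by
      push_cast; ring
    rw [h1, Complex.exp_int_mul_two_pi_mul_I]
    simp

def SpecIn (f : ℂ → ℂ) (P : ℤ → Prop) : Prop :=
  ∃ (ι : Type) (S : Finset ι) (c : ι → ℂ) (d : ι → ℤ),
    (∀ i ∈ S, P (d i)) ∧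
    ∀ t : ℝ, f (Complex.exp (2 * Real.pi * Complex.I * t)) = ∑ i ∈ S, c i * χ (d i) t

lemma SpecIn.mono {f : ℂ → ℂ} {P Q : ℤ → Prop} (h : SpecIn f P) (hPQ : ∀ n, P n → Q n) :
    SpecIn f Q := by
  obtain ⟨ι, S, c, d, h1, h2⟩ := h
  exact ⟨ι, S, c, d, fun i hi => hPQ _ (h1 i hi), h2⟩

lemma SpecIn.mul {f g : ℂ → ℂ} {P Q : ℤ → Prop} (hf : SpecIn f P) (hg : SpecIn g Q) :
    SpecIn (fun z => f z * g z) (fun n => ∃ p q, P p ∧ Q q ∧ n = p + q) := by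
  obtain ⟨ι, S, c, d, h1, h2⟩ := hf
  obtain ⟨ι', S', c', d', h1', h2'⟩ := hg
  refine ⟨ι × ι', S ×ˢ S', fun i => c i.1 * c' i.2, fun i => d i.1 + d' i.2, ?_, ?_⟩
  · rintro ⟨i, j⟩ hij
    rw [Finset.mem_product] at hij
    exact ⟨d i, d' j, h1 i hij.1, h1' j hij.2, rfl⟩
  · intro t
    simp only [h2 t, h2' t, Finset.sum_mul_sum, Finset.sum_product]
    refine Finset.sum_congr rfl fun i _ => Finset.sum_congr rfl fun j _ => ?_
    rw [χ_add]; ring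

lemma SpecIn.conj {f : ℂ → ℂ} {P : ℤ → Prop} (hf : SpecIn f P) :
    SpecIn (fun z => (starRingEnd ℂ) (f z)) (fun n => P (-n)) := by
  obtain ⟨ι, S, c, d, h1, h2⟩ := hf
  refine ⟨ι, S, fun i => (starRingEnd ℂ) (c i), fun i => -(d i), ?_, ?_⟩
  · intro i hi; simpa using h1 i hi
  · intro t
    show (starRingEnd ℂ) (f _) = _
    rw [h2 t, map_sum]
    refine Finset.sum_congr rfl fun i _ => ?_
    rw [map_mul, χ_conj]

lemma SpecIn.const (c : ℂ) : SpecIn (fun _ => c) (fun n => n = 0) :=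
  ⟨Unit, {()}, fun _ => c, fun _ => 0, fun _ _ => rfl, fun t => by simp [χ]⟩

lemma SpecIn.const_mul {f : ℂ → ℂ} {P : ℤ → Prop} (hf : SpecIn f P) (c : ℂ) :
    SpecIn (fun z => c * f z) P := by
  obtain ⟨ι, S, c', d, h1, h2⟩ := hf
  refine ⟨ι, S, fun i => c * c' i, d, h1, fun t => ?_⟩
  show c * f _ = _
  rw [h2 t, Finset.mul_sum]
  exact Finset.sum_congr rfl fun i _ => by ring


lemma SpecIn.congr {f g : ℂ → ℂ} {P : ℤ → Prop} (h : SpecIn f P) (hfg : ∀ z, f z = g z) :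
    SpecIn g P := by
  obtain ⟨ι, S, c, d, h1, h2⟩ := h
  exact ⟨ι, S, c, d, h1, fun t => by rw [← hfg, h2 t]⟩

/-! ### Arithmetic lemmas -/

variable (m : ℕ → ℕ) (a : ℕ → ℕ → ℕ)

/-- Exponents appearing in `ThetaC`. -/
def Ee (j p : ℕ) : ℕ := p * hgt m a (j - 1) + ∑ i ∈ Finset.range p, a j i

lemma hgt_pos (hm : ∀ j, 1 ≤ j → 2 ≤ m j) : ∀ k, 1 ≤ hgt m a k := by
  intro k
  induction k with
  | zero => exact le_refl _
  | succ k ih =>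
    have h2 : 2 ≤ m (k + 1) := hm _ (by omega)
    have : 1 * 1 ≤ m (k + 1) * hgt m a k := Nat.mul_le_mul (by omega) ih
    show 1 ≤ m (k + 1) * hgt m a k + _
    omega

lemma hgt_mono (hm : ∀ j, 1 ≤ j → 2 ≤ m j) : Monotone (hgt m a) := by
  apply monotone_nat_of_le_succ
  intro k
  have h2 : 2 ≤ m (k + 1) := hm _ (by omega)
  have : 1 * hgt m a k ≤ m (k + 1) * hgt m a k := Nat.mul_le_mul_right _ (by omega)
  show hgt m a k ≤ m (k + 1) * hgt m a k + _
  omega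

lemma Ee_gap (ha : ∀ j i, 1 ≤ a j i) {j q p : ℕ} (hq : q < p) :
    Ee m a j q + hgt m a (j - 1) + 1 ≤ Ee m a j p := by
  have h1 : ∑ i ∈ Finset.range q, a j i + a j q ≤ ∑ i ∈ Finset.range p, a j i := by
    rw [← Finset.sum_range_succ]
    exact Finset.sum_le_sum_of_subset (Finset.range_subset_range.mpr hq)
  have h2 : (q + 1) * hgt m a (j - 1) ≤ p * hgt m a (j - 1) :=
    Nat.mul_le_mul_right _ hq
  rw [add_one_mul] at h2
  have h3 := ha j q
  unfold Ee
  omega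

lemma Ee_mono {j p p' : ℕ} (h : p ≤ p') : Ee m a j p ≤ Ee m a j p' := by
  unfold Ee
  have h1 : ∑ i ∈ Finset.range p, a j i ≤ ∑ i ∈ Finset.range p', a j i :=
    Finset.sum_le_sum_of_subset (Finset.range_subset_range.mpr h)
  have h2 : p * hgt m a (j - 1) ≤ p' * hgt m a (j - 1) := Nat.mul_le_mul_right _ h
  omega

lemma Ee_top (hm : ∀ j, 1 ≤ j → 2 ≤ m j) (s : ℕ) :
    Ee m a (s + 1) (m (s + 1) - 1) + hgt m a s = hgt m a (s + 1) := by
  have h2 : 2 ≤ m (s + 1) := hm _ (by omega)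
  show (m (s + 1) - 1) * hgt m a s + _ + hgt m a s = m (s + 1) * hgt m a s + _
  have : (m (s + 1) - 1) * hgt m a s + hgt m a s = m (s + 1) * hgt m a s := by
    rw [← Nat.succ_pred_eq_of_pos (show 0 < m (s + 1) by omega), Nat.succ_sub_one,
      Nat.succ_mul]
  omega

lemma Ee_le (hm : ∀ j, 1 ≤ j → 2 ≤ m j) {s p : ℕ} (hp : p < m (s + 1)) :
    (Ee m a (s + 1) p : ℤ) ≤ (hgt m a (s + 1) : ℤ) - hgt m a s := by
  have h1 : Ee m a (s + 1) p ≤ Ee m a (s + 1) (m (s + 1) - 1) :=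
    Ee_mono m a (by omega)
  have h2 := Ee_top m a hm s
  omega

/-! ### Spectra -/

lemma spec_theta (j : ℕ) :
    SpecIn (ThetaC m a j) (fun n => ∃ p, p < m j ∧ n = (Ee m a j p : ℤ)) := by
  refine ⟨ℕ, Finset.range (m j), fun _ => 1, fun p => (Ee m a j p : ℤ),
    fun p hp => ⟨p, Finset.mem_range.mp hp, rfl⟩, fun t => ?_⟩
  unfold ThetaC
  refine Finset.sum_congr rfl fun p _ => ?_
  rw [one_mul, ← χ_zpow, zpow_natCast]
  rfl

lemma spec_TT (hm : ∀ j, 1 ≤ j → 2 ≤ m j) (ha : ∀ j i, 1 ≤ a j i) (s : ℕ) :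
    SpecIn (TTj m a (s + 1)) (fun n => n = 0 ∨
      ((hgt m a s : ℤ) < |n| ∧ |n| ≤ (hgt m a (s + 1) : ℤ) - hgt m a s)) := by
  have hmul := ((spec_theta m a (s + 1)).mul
    (spec_theta m a (s + 1)).conj).const_mul ((m (s + 1) : ℂ)⁻¹)
  refine (hmul.congr fun z => by unfold TTj; ring).mono ?_
  rintro n ⟨p, q, ⟨p', hp', rfl⟩, ⟨q', hq', hq⟩, rfl⟩
  have hq2 : q = -(Ee m a (s + 1) q' : ℤ) := by omega
  subst hq2
  rcases lt_trichotomy p' q' with h | h | h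
  · have hgap := Ee_gap m a ha (j := s + 1) h
    have hle := Ee_le m a hm hq'
    rcases abs_cases ((Ee m a (s + 1) p' : ℤ) + -(Ee m a (s + 1) q' : ℤ)) with
      ⟨he, _⟩ | ⟨he, _⟩ <;> simp only [show (s + 1) - 1 = s from rfl] at hgap <;> omega
  · subst h; left; omega
  · have hgap := Ee_gap m a ha (j := s + 1) h
    have hle := Ee_le m a hm hp'
    rcases abs_cases ((Ee m a (s + 1) p' : ℤ) + -(Ee m a (s + 1) q' : ℤ)) with
      ⟨he, _⟩ | ⟨he, _⟩ <;> simp only [show (s + 1) - 1 = s from rfl] at hgap <;> omega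

lemma spec_prod (hm : ∀ j, 1 ≤ j → 2 ≤ m j) (ha : ∀ j i, 1 ≤ a j i) (l : ℕ) :
    ∀ k, l ≤ k → SpecIn (fun z => ∏ j ∈ Finset.Icc (l + 1) k, TTj m a j z)
      (fun n => n = 0 ∨
        ((hgt m a l : ℤ) ≤ |n| ∧ |n| ≤ (hgt m a k : ℤ) - hgt m a l)) := by
  intro k hk
  induction k, hk using Nat.le_induction with
  | base =>
    refine ((SpecIn.const 1).congr fun z => ?_).mono fun n hn => Or.inl hn
    rw [Finset.Icc_eq_empty (by omega), Finset.prod_empty]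
  | succ k hk ih =>
    have hmono : (hgt m a l : ℤ) ≤ hgt m a k := by
      exact_mod_cast hgt_mono m a hm hk
    have hmono2 : (hgt m a k : ℤ) ≤ hgt m a (k + 1) := by
      exact_mod_cast hgt_mono m a hm (Nat.le_succ k)
    have hins : Finset.Icc (l + 1) (k + 1) = insert (k + 1) (Finset.Icc (l + 1) k) := by
      rw [← Finset.insert_Icc_right_eq_Icc_add_one (by omega)]
    refine (((spec_TT m a hm ha k).mul ih).congr fun z => ?_).mono ?_
    · rw [hins, Finset.prod_insert (by simp)]
    · rintro n ⟨p, q, hp, hq, rfl⟩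
      have h1 := abs_add_le p q
      have h2 : |p| - |q| ≤ |p + q| := by
        calc |p| - |q| = |p| - |(-q)| := by rw [abs_neg]
        _ ≤ |p - (-q)| := abs_sub_abs_le_abs_sub p (-q)
        _ = |p + q| := by rw [sub_neg_eq_add]
      have h0 : (0:ℤ) ≤ |p + q| := abs_nonneg _
      rcases hp with rfl | ⟨hp1, hp2⟩
      · rcases hq with rfl | ⟨hq1, hq2⟩
        · left; omega
        · right
          constructor
          · calc (hgt m a l : ℤ) ≤ |q| := hq1
            _ = |0 + q| := by rw [zero_add]
          · calc |0 + q| = |q| := by rw [zero_add]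
            _ ≤ (hgt m a k : ℤ) - hgt m a l := hq2
            _ ≤ (hgt m a (k + 1) : ℤ) - hgt m a l := by omega
      · rcases hq with rfl | ⟨hq1, hq2⟩
        · right
          rw [add_zero]
          omega
        · right
          constructor <;> omega

/-! ### Measurability / continuity -/

lemma measurable_zpowC (n : ℤ) : Measurable fun z : ℂ => z ^ n := by
  obtain ⟨k, rfl | rfl⟩ := n.eq_nat_or_neg
  · simpa [zpow_natCast] using measurable_id.pow_const k
  · simp only [zpow_neg, zpow_natCast]
    exact (measurable_id.pow_const k).inv

lemma continuous_theta (j : ℕ) : Continuous (ThetaC m a j) := by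
  unfold ThetaC
  exact continuous_finset_sum _ fun p _ => continuous_pow _

lemma continuous_TT (j : ℕ) : Continuous (TTj m a j) := by
  unfold TTj
  exact ((continuous_const.mul (continuous_theta m a j)).mul
    (Complex.continuous_conj.comp (continuous_theta m a j)))

lemma continuous_χ (n : ℤ) : Continuous (χ n) := by
  unfold χ
  exact Complex.continuous_exp.comp (continuous_const.mul Complex.continuous_ofReal)

/-- Main computation: if `f` has spectrum in `P` and `¬ P α`, the `α`-th Fourier
coefficient vanishes. -/
lemma fCoeff_eq_zero {f : ℂ → ℂ} (hf : Continuous f) {P : ℤ → Prop}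
    (h : SpecIn f P) {α : ℤ} (hα : ¬ P α) : fCoeff f α = 0 := by
  obtain ⟨ι, S, c, d, hP, hrep⟩ := h
  have he : Continuous fun t : ℝ => Complex.exp (2 * Real.pi * Complex.I * t) :=
    Complex.continuous_exp.comp (continuous_const.mul Complex.continuous_ofReal)
  rw [fCoeff, circleMeasure,
    MeasureTheory.integral_map (f := fun z => z ^ (-α) * f z) he.aemeasurable
      ((measurable_zpowC (-α)).mul hf.measurable).aestronglyMeasurable]
  have key : ∀ t : ℝ,
      Complex.exp (2 * Real.pi * Complex.I * t) ^ (-α) *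
        f (Complex.exp (2 * Real.pi * Complex.I * t)) =
      ∑ i ∈ S, c i * χ (d i + -α) t := by
    intro t
    rw [hrep t, χ_zpow, Finset.mul_sum]
    refine Finset.sum_congr rfl fun i _ => ?_
    rw [χ_add]
    ring
  calc (∫ t in Set.Ico (0:ℝ) 1, Complex.exp (2 * Real.pi * Complex.I * t) ^ (-α) *
          f (Complex.exp (2 * Real.pi * Complex.I * t)))
      = ∫ t in Set.Ico (0:ℝ) 1, ∑ i ∈ S, c i * χ (d i + -α) t := by
        exact MeasureTheory.integral_congr_ae (Filter.Eventually.of_forall fun t => key t)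
    _ = ∑ i ∈ S, ∫ t in Set.Ico (0:ℝ) 1, c i * χ (d i + -α) t := by
        refine MeasureTheory.integral_finset_sum _ fun i _ => ?_
        exact ((continuous_const.mul (continuous_χ (d i + -α))).integrableOn_Icc).mono_set
          Set.Ico_subset_Icc_self
    _ = ∑ i ∈ S, c i * ∫ t in Set.Ico (0:ℝ) 1, χ (d i + -α) t := by
        exact Finset.sum_congr rfl fun i _ => MeasureTheory.integral_const_mul _ _
    _ = 0 := by
        refine Finset.sum_eq_zero fun i hi => ?_
        rw [χ_integral, if_neg, mul_zero]
        intro h0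
        exact hα (by have := hP i hi; rwa [show d i = α by omega] at this)

end MPG

/-- For `l < k`, the Fourier coefficients `u_α^{(l:k)}` of
`∏_{j=l+1}^{k} (1/m_j) Θ_j conj(Θ_j)` vanish for all `α` with `0 < |α| < h_l`. -/
theorem middle_product_gap (m : ℕ → ℕ) (a : ℕ → ℕ → ℕ)
    (hm : ∀ j, 1 ≤ j → 2 ≤ m j) (ha : ∀ j i, 1 ≤ a j i)
    (l k : ℕ) (hlk : l < k) (α : ℤ) (hα : 0 < |α|) (hα' : |α| < (hgt m a l : ℤ)) :
    fCoeff (fun z => ∏ j ∈ Finset.Icc (l + 1) k, TTj m a j z) α = 0 := by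
  have hcont : Continuous fun z => ∏ j ∈ Finset.Icc (l + 1) k, TTj m a j z :=
    continuous_finset_prod _ fun j _ => MPG.continuous_TT m a j
  refine MPG.fCoeff_eq_zero hcont (MPG.spec_prod m a hm ha l k hlk.le) ?_
  rintro (rfl | ⟨h1, -⟩)
  · simp at hα
  · omega
end

section
/- In consequence, for 0 ≤ p, q < h_k, the inner product ⟨ z^p / Π_{j=1}^k Θ_j(z), z^q / Π_{j=1}^k Θ_j(z) ⟩ in L²(S^1, dκ), where κ is the weak limit of the Riesz-product measures, equals Π_{j=1}^k m_j^{−1} if p = q and 0 otherwise; equivalently, the functions (Π_{j=1}^k m_j)^{1/2} · z^p / Π_{j=1}^k Θ_j(z), 0 ≤ p < h_k, form an orthonormal system in L²(S^1, dκ). -/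
open MeasureTheory Finset Filter Topology

namespace RPaux

variable (m : ℕ → ℕ) (a : ℕ → ℕ → ℕ)

/-- exponents of `ThetaC` -/
def ee (j r : ℕ) : ℕ := r * hgt m a (j - 1) + ∑ i ∈ Finset.range r, a j i

noncomputable def cexp2 (t : ℝ) : ℂ := Complex.exp (2 * Real.pi * Complex.I * t)

lemma norm_cexp2 (t : ℝ) : ‖cexp2 t‖ = 1 := by
  have h : cexp2 t = Complex.exp (((2 * Real.pi * t : ℝ) : ℂ) * Complex.I) := by
    unfold cexp2; congr 1; push_cast; ring
  rw [h, Complex.norm_exp_ofReal_mul_I]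

lemma hgt_pos (hm : ∀ j, 1 ≤ j → 2 ≤ m j) (k : ℕ) : 0 < hgt m a k := by
  induction k with
  | zero => simp [hgt]
  | succ k ih =>
    have h2 : 2 * 1 ≤ m (k + 1) * hgt m a k :=
      Nat.mul_le_mul (hm (k + 1) (by omega)) ih
    simp only [hgt]; omega

lemma hgt_le_succ (hm : ∀ j, 1 ≤ j → 2 ≤ m j) (k : ℕ) :
    hgt m a k ≤ hgt m a (k + 1) := by
  have h2 : 2 * hgt m a k ≤ m (k + 1) * hgt m a k :=
    Nat.mul_le_mul_right _ (hm (k + 1) (by omega))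
  simp only [hgt]; omega

lemma hgt_mono (hm : ∀ j, 1 ≤ j → 2 ≤ m j) : Monotone (hgt m a) :=
  monotone_nat_of_le_succ (hgt_le_succ m a hm)

lemma ee_le (j r : ℕ) (hr : r < m (j + 1)) :
    ee m a (j + 1) r + hgt m a j ≤ hgt m a (j + 1) := by
  unfold ee
  simp only [Nat.succ_sub_one, hgt]
  have h1 : (r + 1) * hgt m a j ≤ m (j + 1) * hgt m a j :=
    Nat.mul_le_mul_right _ (by omega)
  have h2 : ∑ i ∈ Finset.range r, a (j + 1) i ≤
      ∑ i ∈ Finset.range (m (j + 1) - 1), a (j + 1) i :=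
    Finset.sum_le_sum_of_subset (Finset.range_subset_range.mpr (by omega))
  have h3 : (r + 1) * hgt m a j = r * hgt m a j + hgt m a j := by ring
  omega

lemma ee_gap (ha : ∀ j i, 1 ≤ a j i) (j r s : ℕ) (hrs : r < s) :
    ee m a (j + 1) r + hgt m a j + 1 ≤ ee m a (j + 1) s := by
  unfold ee
  simp only [Nat.succ_sub_one]
  have h1 : (r + 1) * hgt m a j ≤ s * hgt m a j :=
    Nat.mul_le_mul_right _ (by omega)
  have h2 : ∑ i ∈ Finset.range r, a (j + 1) i + a (j + 1) r ≤
      ∑ i ∈ Finset.range s, a (j + 1) i := by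
    rw [← Finset.sum_range_succ]
    exact Finset.sum_le_sum_of_subset (Finset.range_subset_range.mpr (by omega))
  have h3 := ha (j + 1) r
  have h4 : (r + 1) * hgt m a j = r * hgt m a j + hgt m a j := by ring
  omega

lemma fourier_int (n : ℤ) :
    (∫ t in Set.Ico (0 : ℝ) 1, Complex.exp (2 * Real.pi * Complex.I * n * t)) =
      if n = 0 then 1 else 0 := by
  rw [MeasureTheory.integral_Ico_eq_integral_Ioo, ← MeasureTheory.integral_Ioc_eq_integral_Ioo,
    ← intervalIntegral.integral_of_le (zero_le_one)]
  by_cases h : n = 0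
  · simp [h]
  · have hc : (2 * (Real.pi : ℂ) * Complex.I * n) ≠ 0 := by
      simp [Complex.I_ne_zero, Real.pi_ne_zero, h]
    rw [if_neg h]
    rw [integral_exp_mul_complex hc]
    have h1 : Complex.exp (2 * (Real.pi : ℂ) * Complex.I * n * ((1 : ℝ) : ℂ)) = 1 := by
      rw [Complex.ofReal_one, mul_one,
        show (2 * (Real.pi : ℂ) * Complex.I * n) = n * (2 * Real.pi * Complex.I) by ring]
      exact Complex.exp_int_mul_two_pi_mul_I n
    rw [h1, Complex.ofReal_zero, mul_zero, Complex.exp_zero, sub_self, zero_div]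


lemma cont_theta (j : ℕ) : Continuous (ThetaC m a j) := by
  unfold ThetaC
  exact continuous_finset_sum _ fun i _ => continuous_pow _

lemma cont_cexp2 : Continuous cexp2 :=
  Complex.continuous_exp.comp (continuous_const.mul Complex.continuous_ofReal)

lemma contD (s : Finset ℕ) :
    Continuous (fun z : ℂ => ∏ j ∈ s, (Complex.normSq (ThetaC m a j z) / m j)) :=
  continuous_finset_prod _ fun j _ =>
    (Complex.continuous_normSq.comp (cont_theta m a j)).div_const _

lemma contDC (s : Finset ℕ) :
    Continuous (fun t : ℝ =>
      ∏ j ∈ s, ((Complex.normSq (ThetaC m a j (cexp2 t)) / m j : ℝ) : ℂ)) :=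
  continuous_finset_prod _ fun j _ =>
    Complex.continuous_ofReal.comp
      (((Complex.continuous_normSq.comp (cont_theta m a j)).div_const _).comp cont_cexp2)

lemma cont_chi (n : ℤ) : Continuous (fun t : ℝ => Complex.exp (2 * Real.pi * Complex.I * n * t)) :=
  Complex.continuous_exp.comp (continuous_const.mul Complex.continuous_ofReal)

lemma theta_cexp2 (j : ℕ) (t : ℝ) :
    ThetaC m a j (cexp2 t) =
      ∑ r ∈ Finset.range (m j), Complex.exp (2 * Real.pi * Complex.I * (ee m a j r : ℕ) * t) := by
  unfold ThetaC cexp2 ee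
  refine Finset.sum_congr rfl fun r _ => ?_
  rw [← Complex.exp_nat_mul]
  congr 1
  push_cast
  ring

lemma conj_theta_cexp2 (j : ℕ) (t : ℝ) :
    (starRingEnd ℂ) (ThetaC m a j (cexp2 t)) =
      ∑ r ∈ Finset.range (m j),
        Complex.exp (-(2 * Real.pi * Complex.I * (ee m a j r : ℕ) * t)) := by
  rw [theta_cexp2, map_sum]
  refine Finset.sum_congr rfl fun r _ => ?_
  rw [← Complex.exp_conj]
  congr 1
  simp only [map_mul, Complex.conj_I, Complex.conj_ofReal, map_natCast, map_ofNat]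
  ring

lemma dens_expand (j : ℕ) (t : ℝ) :
    ((Complex.normSq (ThetaC m a j (cexp2 t)) / m j : ℝ) : ℂ) =
      (m j : ℂ)⁻¹ * ∑ r ∈ Finset.range (m j), ∑ s ∈ Finset.range (m j),
        Complex.exp (2 * Real.pi * Complex.I * ((ee m a j r : ℤ) - (ee m a j s : ℤ)) * t) := by
  rw [Complex.ofReal_div, div_eq_mul_inv, mul_comm, ← Complex.mul_conj]
  push_cast
  congr 1
  rw [conj_theta_cexp2 m a j t, theta_cexp2 m a j t, Finset.sum_mul_sum]
  refine Finset.sum_congr rfl fun r _ => Finset.sum_congr rfl fun s _ => ?_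
  rw [← Complex.exp_add]
  congr 1
  push_cast
  ring


lemma key (hm : ∀ j, 1 ≤ j → 2 ≤ m j) (ha : ∀ j i, 1 ≤ a j i) (k : ℕ) :
    ∀ N, k ≤ N → ∀ n : ℤ,
      ((-(hgt m a k : ℤ) < n ∧ n < hgt m a k) ∨
        ((hgt m a N : ℤ) - hgt m a k < n ∨ n < (hgt m a k : ℤ) - hgt m a N)) →
      (∫ t in Set.Ico (0 : ℝ) 1,
          Complex.exp (2 * Real.pi * Complex.I * n * t) *
            ∏ j ∈ Finset.Icc (k + 1) N,
              ((Complex.normSq (ThetaC m a j (cexp2 t)) / m j : ℝ) : ℂ)) =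
        if n = 0 then 1 else 0 := by
  intro N hkN
  induction N, hkN using Nat.le_induction with
  | base =>
    intro n _
    rw [Finset.Icc_eq_empty (by omega)]
    simp only [Finset.prod_empty, mul_one]
    exact fourier_int n
  | succ N hkN IH =>
    intro n hn
    have hM : 2 ≤ m (N + 1) := hm (N + 1) (by omega)
    have hhm : hgt m a k ≤ hgt m a N := hgt_mono m a hm hkN
    have hhs : hgt m a N ≤ hgt m a (N + 1) := hgt_le_succ m a hm N
    set g : ℤ → ℝ → ℂ := fun d t =>
      Complex.exp (2 * Real.pi * Complex.I * d * t) *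
        ∏ j ∈ Finset.Icc (k + 1) N,
          ((Complex.normSq (ThetaC m a j (cexp2 t)) / m j : ℝ) : ℂ) with hg
    have hgint : ∀ d : ℤ, IntegrableOn (g d) (Set.Ico (0 : ℝ) 1) := by
      intro d
      exact (((cont_chi d).mul (contDC m a _)).integrableOn_Icc).mono_set
        Set.Ico_subset_Icc_self
    have step1 : (∫ t in Set.Ico (0 : ℝ) 1,
        Complex.exp (2 * Real.pi * Complex.I * n * t) *
          ∏ j ∈ Finset.Icc (k + 1) (N + 1),
            ((Complex.normSq (ThetaC m a j (cexp2 t)) / m j : ℝ) : ℂ)) =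
        ∫ t in Set.Ico (0 : ℝ) 1, (m (N + 1) : ℂ)⁻¹ *
          ∑ r ∈ Finset.range (m (N + 1)), ∑ s ∈ Finset.range (m (N + 1)),
            g (n + (ee m a (N + 1) r : ℤ) - (ee m a (N + 1) s : ℤ)) t := by
      refine integral_congr_ae (Filter.Eventually.of_forall fun t => ?_)
      dsimp only
      rw [Finset.prod_Icc_succ_top (by omega : k + 1 ≤ N + 1), dens_expand]
      have e1 : ∀ r s : ℕ,
          Complex.exp (2 * Real.pi * Complex.I *
            ((n + (ee m a (N + 1) r : ℤ) - (ee m a (N + 1) s : ℤ) : ℤ) : ℂ) * t) =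
          Complex.exp (2 * Real.pi * Complex.I * n * t) *
            Complex.exp (2 * Real.pi * Complex.I *
              (((ee m a (N + 1) r : ℤ) - (ee m a (N + 1) s : ℤ) : ℤ) : ℂ) * t) := by
        intro r s
        rw [← Complex.exp_add]
        congr 1
        push_cast
        ring
      simp only [hg, e1, Finset.mul_sum]
      refine Finset.sum_congr rfl fun r _ => Finset.sum_congr rfl fun s _ => ?_
      push_cast
      ring
    rw [step1, MeasureTheory.integral_const_mul,
      MeasureTheory.integral_finset_sum _ (fun r _ =>
        integrable_finset_sum _ (fun s _ => hgint _))]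
    have step2 : ∀ r ∈ Finset.range (m (N + 1)),
        (∫ t in Set.Ico (0 : ℝ) 1, ∑ s ∈ Finset.range (m (N + 1)),
          g (n + (ee m a (N + 1) r : ℤ) - (ee m a (N + 1) s : ℤ)) t) =
        ∑ s ∈ Finset.range (m (N + 1)),
          ∫ t in Set.Ico (0 : ℝ) 1,
            g (n + (ee m a (N + 1) r : ℤ) - (ee m a (N + 1) s : ℤ)) t :=
      fun r _ => MeasureTheory.integral_finset_sum _ (fun s _ => hgint _)
    rw [Finset.sum_congr rfl step2]
    have step3 : ∀ r ∈ Finset.range (m (N + 1)), ∀ s ∈ Finset.range (m (N + 1)),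
        (∫ t in Set.Ico (0 : ℝ) 1,
          g (n + (ee m a (N + 1) r : ℤ) - (ee m a (N + 1) s : ℤ)) t) =
        if r = s then (if n = 0 then 1 else 0) else 0 := by
      intro r hr s hs
      rw [Finset.mem_range] at hr hs
      rcases eq_or_ne r s with rfl | hne
      · rw [if_pos rfl]
        have : n + (ee m a (N + 1) r : ℤ) - (ee m a (N + 1) r : ℤ) = n := by ring
        rw [this]
        refine IH n ?_
        rcases hn with h | h
        · exact Or.inl h
        · right; omega
      · rw [if_neg hne]
        have hcond : ((hgt m a N : ℤ) - hgt m a k <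
              n + (ee m a (N + 1) r : ℤ) - (ee m a (N + 1) s : ℤ) ∨
            n + (ee m a (N + 1) r : ℤ) - (ee m a (N + 1) s : ℤ) <
              (hgt m a k : ℤ) - hgt m a N) ∧
            n + (ee m a (N + 1) r : ℤ) - (ee m a (N + 1) s : ℤ) ≠ 0 := by
          rcases Nat.lt_or_ge r s with hlt | hge
          · have g1 := ee_gap m a ha N r s hlt
            have g2 := ee_le m a N s hs
            have g3 := ee_le m a N r (by omega)
            constructor
            · rcases hn with h | h
              · right; omega
              · rcases h with h | h
                · left; omega
                · right; omega
            · omega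
          · have hlt : s < r := by omega
            have g1 := ee_gap m a ha N s r hlt
            have g2 := ee_le m a N r hr
            have g3 := ee_le m a N s (by omega)
            constructor
            · rcases hn with h | h
              · left; omega
              · rcases h with h | h
                · left; omega
                · right; omega
            · omega
        rw [IH _ (Or.inr hcond.1), if_neg hcond.2]
    rw [Finset.sum_congr rfl fun r hr =>
      Finset.sum_congr rfl fun s hs => step3 r hr s hs]
    simp only [Finset.sum_ite_eq, Finset.mem_range]
    rw [Finset.sum_congr rfl (fun r hr => if_pos (Finset.mem_range.mp hr))]
    rw [Finset.sum_const, Finset.card_range, nsmul_eq_mul]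
    rw [← mul_assoc, inv_mul_cancel₀ (by exact_mod_cast (by omega : m (N+1) ≠ 0)), one_mul]


noncomputable def Pk (k : ℕ) (w : ℂ) : ℂ := ∏ j ∈ Finset.Icc 1 k, ThetaC m a j w

noncomputable def gg (k p q : ℕ) (w : ℂ) : ℂ :=
  (w ^ p / Pk m a k w) * (starRingEnd ℂ) (w ^ q / Pk m a k w)

noncomputable def GG (k p q : ℕ) (z : ℂ) : ℂ :=
  min ‖z‖ 1 • gg m a k p q (((‖z‖ : ℝ) : ℂ)⁻¹ * z)

lemma GG_sphere (k p q : ℕ) (z : ℂ) (hz : ‖z‖ = 1) :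
    GG m a k p q z = gg m a k p q z := by
  unfold GG
  rw [hz]
  simp

lemma Icc_one_eq_Ioc (x : ℕ) : Finset.Icc 1 x = Finset.Ioc 0 x := by
  ext i
  simp only [Finset.mem_Icc, Finset.mem_Ioc]
  omega

lemma Icc_succ_eq_Ioc (k x : ℕ) : Finset.Icc (k + 1) x = Finset.Ioc k x := by
  ext i
  simp only [Finset.mem_Icc, Finset.mem_Ioc]
  omega

lemma prod_TTj (N : ℕ) (z : ℂ) :
    ∏ j ∈ Finset.Icc 1 N, TTj m a j z =
      ((∏ j ∈ Finset.Icc 1 N, (Complex.normSq (ThetaC m a j z) / m j) : ℝ) : ℂ) := by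
  push_cast
  refine Finset.prod_congr rfl fun j _ => ?_
  unfold TTj
  rw [mul_assoc, Complex.mul_conj]
  ring

lemma cont_Pk (k : ℕ) : Continuous (Pk m a k) :=
  continuous_finset_prod _ fun j _ => cont_theta m a j

lemma chain {E : Type*} [NormedAddCommGroup E] [NormedSpace ℝ E] (N : ℕ) (f : ℂ → E)
    (hf : Continuous f) :
    (∫ z, f z ∂(circleMeasure.withDensity
        (fun z => ENNReal.ofReal ((∏ j ∈ Finset.Icc 1 N, TTj m a j z).re)))) =
      ∫ t in Set.Ico (0 : ℝ) 1,
        (∏ j ∈ Finset.Icc 1 N, (Complex.normSq (ThetaC m a j (cexp2 t)) / m j)) •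
          f (cexp2 t) := by
  set D : ℂ → ℝ := fun z => ∏ j ∈ Finset.Icc 1 N, (Complex.normSq (ThetaC m a j z) / m j)
    with hDdef
  have hDc : Continuous D := contD m a _
  have hD0 : ∀ z, 0 ≤ D z := fun z =>
    Finset.prod_nonneg fun j _ => div_nonneg (Complex.normSq_nonneg _) (Nat.cast_nonneg _)
  have h1 : (fun z => ENNReal.ofReal ((∏ j ∈ Finset.Icc 1 N, TTj m a j z).re)) =
      fun z => ((Real.toNNReal (D z) : NNReal) : ENNReal) := by
    funext z
    rw [prod_TTj, Complex.ofReal_re]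
    rfl
  rw [h1, integral_withDensity_eq_integral_smul
    (f := fun z => Real.toNNReal (D z))
    (by exact (continuous_real_toNNReal.comp hDc).measurable) f]
  have h2 : ∀ z : ℂ, (Real.toNNReal (D z)) • f z = D z • f z := fun z => by
    rw [NNReal.smul_def, Real.coe_toNNReal _ (hD0 z)]
  rw [MeasureTheory.integral_congr_ae (Filter.Eventually.of_forall h2)]
  unfold circleMeasure
  rw [show (fun t : ℝ => Complex.exp (2 * Real.pi * Complex.I * t)) = cexp2 from rfl]
  rw [MeasureTheory.integral_map (f := fun z => D z • f z) cont_cexp2.aemeasurable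
    (hDc.smul hf).aestronglyMeasurable]


lemma gg_eq (k p q : ℕ) (w : ℂ) :
    gg m a k p q w =
      (w ^ p * ((starRingEnd ℂ) w) ^ q) / ((Complex.normSq (Pk m a k w) : ℝ) : ℂ) := by
  unfold gg
  rw [map_div₀, map_pow, div_mul_div_comm, Complex.mul_conj]

lemma ofReal_prodF_k (k : ℕ) (w : ℂ) :
    ((∏ j ∈ Finset.Icc 1 k, (Complex.normSq (ThetaC m a j w) / m j) : ℝ) : ℂ) =
      ((Complex.normSq (Pk m a k w) : ℝ) : ℂ) * ∏ j ∈ Finset.Icc 1 k, (m j : ℂ)⁻¹ := by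
  have h1 : ((∏ j ∈ Finset.Icc 1 k, (Complex.normSq (ThetaC m a j w) / m j) : ℝ) : ℂ) =
      ∏ j ∈ Finset.Icc 1 k,
        ((Complex.normSq (ThetaC m a j w) : ℝ) : ℂ) * (m j : ℂ)⁻¹ := by
    push_cast [div_eq_mul_inv]
    rfl
  rw [h1, Finset.prod_mul_distrib]
  congr 1
  rw [show Pk m a k w = ∏ j ∈ Finset.Icc 1 k, ThetaC m a j w from rfl,
    map_prod Complex.normSq, Complex.ofReal_prod]

lemma pointwise (hΘ : ∀ j z, ‖z‖ = 1 → ThetaC m a j z ≠ 0) (k N p q : ℕ) (hkN : k ≤ N)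
    (w : ℂ) (hw : ‖w‖ = 1) :
    (∏ j ∈ Finset.Icc 1 N, (Complex.normSq (ThetaC m a j w) / m j)) • GG m a k p q w =
      (∏ j ∈ Finset.Icc 1 k, (m j : ℂ)⁻¹) *
        ((w ^ p * ((starRingEnd ℂ) w) ^ q) *
          ∏ j ∈ Finset.Icc (k + 1) N, ((Complex.normSq (ThetaC m a j w) / m j : ℝ) : ℂ)) := by
  rw [GG_sphere m a k p q w hw, Complex.real_smul, gg_eq]
  have hsplit : (∏ j ∈ Finset.Icc 1 N, (Complex.normSq (ThetaC m a j w) / m j)) =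
      (∏ j ∈ Finset.Icc 1 k, (Complex.normSq (ThetaC m a j w) / m j)) *
        ∏ j ∈ Finset.Icc (k + 1) N, (Complex.normSq (ThetaC m a j w) / m j) := by
    rw [Icc_one_eq_Ioc, Icc_one_eq_Ioc, Icc_succ_eq_Ioc,
      Finset.prod_Ioc_consecutive _ (Nat.zero_le k) hkN]
  rw [hsplit, Complex.ofReal_mul, ofReal_prodF_k]
  have h2 : ((∏ j ∈ Finset.Icc (k+1) N, (Complex.normSq (ThetaC m a j w) / m j) : ℝ) : ℂ) =
      ∏ j ∈ Finset.Icc (k+1) N, ((Complex.normSq (ThetaC m a j w) / m j : ℝ) : ℂ) := by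
    push_cast
    rfl
  rw [h2]
  have hP : Pk m a k w ≠ 0 := Finset.prod_ne_zero_iff.mpr fun j _ => hΘ j w hw
  have h0 : ((Complex.normSq (Pk m a k w) : ℝ) : ℂ) ≠ 0 := by
    simpa [Complex.ofReal_eq_zero, Complex.normSq_eq_zero] using hP
  have hrearr : (((Complex.normSq (Pk m a k w) : ℝ) : ℂ) *
        (∏ j ∈ Finset.Icc 1 k, (m j : ℂ)⁻¹) *
        ∏ j ∈ Finset.Icc (k+1) N, ((Complex.normSq (ThetaC m a j w) / m j : ℝ) : ℂ)) *
        ((w ^ p * ((starRingEnd ℂ) w) ^ q) / ((Complex.normSq (Pk m a k w) : ℝ) : ℂ)) =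
      ((∏ j ∈ Finset.Icc 1 k, (m j : ℂ)⁻¹) *
        ((w ^ p * ((starRingEnd ℂ) w) ^ q) *
          ∏ j ∈ Finset.Icc (k+1) N, ((Complex.normSq (ThetaC m a j w) / m j : ℝ) : ℂ))) *
        (((Complex.normSq (Pk m a k w) : ℝ) : ℂ) *
          (((Complex.normSq (Pk m a k w) : ℝ) : ℂ))⁻¹) := by
    rw [div_eq_mul_inv]
    ring
  rw [hrearr, mul_inv_cancel₀ h0, mul_one]

lemma pow_cexp2 (p q : ℕ) (t : ℝ) :
    (cexp2 t) ^ p * ((starRingEnd ℂ) (cexp2 t)) ^ q =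
      Complex.exp (2 * Real.pi * Complex.I * (((p : ℤ) - (q : ℤ) : ℤ) : ℂ) * t) := by
  unfold cexp2
  rw [← Complex.exp_conj, ← Complex.exp_nat_mul, ← Complex.exp_nat_mul, ← Complex.exp_add]
  congr 1
  simp only [map_mul, Complex.conj_I, Complex.conj_ofReal, map_ofNat]
  push_cast
  ring

lemma ggContAt (k p q : ℕ) (w : ℂ) (hP : Pk m a k w ≠ 0) :
    ContinuousAt (gg m a k p q) w := by
  unfold gg
  exact (((continuous_pow p).continuousAt).div ((cont_Pk m a k).continuousAt) hP).mul
    (continuous_star.continuousAt.comp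
      (((continuous_pow q).continuousAt).div ((cont_Pk m a k).continuousAt) hP))

lemma norm_normalize (z : ℂ) (hz : z ≠ 0) : ‖((‖z‖ : ℝ) : ℂ)⁻¹ * z‖ = 1 := by
  rw [norm_mul, norm_inv, Complex.norm_real, Real.norm_eq_abs, abs_of_nonneg (norm_nonneg z)]
  exact inv_mul_cancel₀ (norm_ne_zero_iff.mpr hz)

lemma GG_bound (hΘ : ∀ j z, ‖z‖ = 1 → ThetaC m a j z ≠ 0) (k p q : ℕ) :
    ∃ C : ℝ, 0 ≤ C ∧ ∀ z : ℂ, ‖GG m a k p q z‖ ≤ min ‖z‖ 1 * C := by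
  obtain ⟨C, hC⟩ := (isCompact_sphere (0 : ℂ) 1).exists_bound_of_continuousOn
    (fun w hw => (ggContAt m a k p q w
      (Finset.prod_ne_zero_iff.mpr fun j _ =>
        hΘ j w (mem_sphere_zero_iff_norm.mp hw))).continuousWithinAt)
  refine ⟨max C 0, le_max_right _ _, fun z => ?_⟩
  have hmin0 : 0 ≤ min ‖z‖ 1 := le_min (norm_nonneg z) zero_le_one
  rcases eq_or_ne z 0 with rfl | hz
  · simp [GG]
  · have hw : (((‖z‖ : ℝ) : ℂ)⁻¹ * z) ∈ Metric.sphere (0 : ℂ) 1 :=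
      mem_sphere_zero_iff_norm.mpr (norm_normalize z hz)
    unfold GG
    rw [norm_smul, Real.norm_eq_abs, abs_of_nonneg hmin0]
    exact mul_le_mul_of_nonneg_left ((hC _ hw).trans (le_max_left _ _)) hmin0

lemma GG_zero (k p q : ℕ) : GG m a k p q 0 = 0 := by simp [GG]

lemma GG_cont (hΘ : ∀ j z, ‖z‖ = 1 → ThetaC m a j z ≠ 0) (k p q : ℕ) :
    Continuous (GG m a k p q) := by
  obtain ⟨C, hC0, hC⟩ := GG_bound m a hΘ k p q
  rw [continuous_iff_continuousAt]
  intro z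
  rcases eq_or_ne z 0 with rfl | hz
  · unfold ContinuousAt
    rw [GG_zero]
    refine squeeze_zero_norm hC ?_
    have : Continuous (fun z : ℂ => min ‖z‖ 1 * C) :=
      (continuous_norm.min continuous_const).mul continuous_const
    have h := this.continuousAt (x := (0 : ℂ))
    unfold ContinuousAt at h
    simpa using h
  · have hz' : (((‖z‖ : ℝ) : ℂ)) ≠ 0 := by
      simpa [Complex.ofReal_eq_zero] using norm_ne_zero_iff.mpr hz
    have hu : ContinuousAt (fun z : ℂ => (((‖z‖ : ℝ) : ℂ))⁻¹ * z) z :=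
      (((Complex.continuous_ofReal.comp continuous_norm).continuousAt).inv₀ hz').mul
        continuousAt_id
    have hgg : ContinuousAt (gg m a k p q) ((((‖z‖ : ℝ) : ℂ))⁻¹ * z) :=
      ggContAt m a k p q _
        (Finset.prod_ne_zero_iff.mpr fun j _ => hΘ j _ (norm_normalize z hz))
    have hcomp0 := ContinuousAt.comp (x := z) (g := gg m a k p q)
      (f := fun z : ℂ => (((‖z‖ : ℝ) : ℂ))⁻¹ * z) hgg hu
    have hcomp : ContinuousAt
        (fun z : ℂ => gg m a k p q ((((‖z‖ : ℝ) : ℂ))⁻¹ * z)) z := by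
      exact hcomp0
    exact ((continuous_norm.min continuous_const).continuousAt).smul hcomp


lemma main_int (hm : ∀ j, 1 ≤ j → 2 ≤ m j) (ha : ∀ j i, 1 ≤ a j i)
    (hΘ : ∀ j z, ‖z‖ = 1 → ThetaC m a j z ≠ 0)
    (k p q : ℕ) (hp : p < hgt m a k) (hq : q < hgt m a k) (N : ℕ) (hkN : k ≤ N) :
    (∫ z, GG m a k p q z ∂(circleMeasure.withDensity
        (fun z => ENNReal.ofReal ((∏ j ∈ Finset.Icc 1 N, TTj m a j z).re)))) =
      if p = q then ∏ j ∈ Finset.Icc 1 k, (m j : ℂ)⁻¹ else 0 := by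
  rw [chain m a N _ (GG_cont m a hΘ k p q)]
  have hpt : ∀ t : ℝ,
      (∏ j ∈ Finset.Icc 1 N, (Complex.normSq (ThetaC m a j (cexp2 t)) / m j)) •
        GG m a k p q (cexp2 t) =
      (∏ j ∈ Finset.Icc 1 k, (m j : ℂ)⁻¹) *
        (Complex.exp (2 * Real.pi * Complex.I * (((p : ℤ) - (q : ℤ) : ℤ) : ℂ) * t) *
          ∏ j ∈ Finset.Icc (k + 1) N,
            ((Complex.normSq (ThetaC m a j (cexp2 t)) / m j : ℝ) : ℂ)) := by
    intro t
    rw [pointwise m a hΘ k N p q hkN _ (norm_cexp2 t), pow_cexp2]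
  rw [MeasureTheory.integral_congr_ae (Filter.Eventually.of_forall hpt),
    MeasureTheory.integral_const_mul,
    key m a hm ha k N hkN ((p : ℤ) - (q : ℤ)) (Or.inl (by omega))]
  by_cases h : p = q
  · simp [h]
  · have h' : ¬ ((p : ℤ) - (q : ℤ) = 0) := by omega
    simp [h, h']

lemma sphere_ae (κ : MeasureTheory.Measure ℂ) [MeasureTheory.IsProbabilityMeasure κ]
    (hκ : ∀ f : BoundedContinuousFunction ℂ ℝ,
      Tendsto
        (fun N => ∫ z, f z ∂(circleMeasure.withDensity
          (fun z => ENNReal.ofReal ((∏ j ∈ Finset.Icc 1 N, TTj m a j z).re))))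
        atTop (𝓝 (∫ z, f z ∂κ))) :
    ∀ᵐ z ∂κ, z ∈ Metric.sphere (0 : ℂ) 1 := by
  set S := Metric.sphere (0 : ℂ) 1 with hS
  set f0 : ℂ → ℝ := fun z => min (Metric.infDist z S) 1 with hf0
  have hcont : Continuous f0 := (Metric.continuous_infDist_pt S).min continuous_const
  have h0le : ∀ z, 0 ≤ f0 z := fun z => le_min Metric.infDist_nonneg zero_le_one
  have hbd : ∀ z, ‖f0 z‖ ≤ 1 := fun z => by
    rw [Real.norm_eq_abs, abs_of_nonneg (h0le z)]
    exact min_le_right _ _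
  set F := BoundedContinuousFunction.ofNormedAddCommGroup f0 hcont 1 hbd with hF
  have hFcoe : ⇑F = f0 := rfl
  have hzero : ∀ N : ℕ, (∫ z, F z ∂(circleMeasure.withDensity
      (fun z => ENNReal.ofReal ((∏ j ∈ Finset.Icc 1 N, TTj m a j z).re)))) = 0 := by
    intro N
    rw [hFcoe, chain m a N f0 hcont]
    have hz : ∀ t : ℝ,
        (∏ j ∈ Finset.Icc 1 N, (Complex.normSq (ThetaC m a j (cexp2 t)) / m j)) •
          f0 (cexp2 t) = 0 := by
      intro t
      have hmem : cexp2 t ∈ S := by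
        rw [hS, mem_sphere_zero_iff_norm]
        exact norm_cexp2 t
      have : f0 (cexp2 t) = 0 := by
        rw [hf0]
        dsimp only
        rw [Metric.infDist_zero_of_mem hmem]
        simp
      rw [this, smul_zero]
    rw [MeasureTheory.integral_congr_ae (Filter.Eventually.of_forall hz),
      MeasureTheory.integral_zero]
  have hlim := hκ F
  rw [show (fun N => ∫ z, F z ∂(circleMeasure.withDensity
      (fun z => ENNReal.ofReal ((∏ j ∈ Finset.Icc 1 N, TTj m a j z).re)))) =
      fun _ : ℕ => (0 : ℝ) from funext hzero] at hlim
  have hI : ∫ z, F z ∂κ = 0 := (tendsto_nhds_unique hlim tendsto_const_nhds)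
  have hae : f0 =ᵐ[κ] 0 := by
    rw [← MeasureTheory.integral_eq_zero_iff_of_nonneg h0le (F.integrable κ)]
    exact hI
  have hsub : {z : ℂ | ¬ z ∈ S} ⊆ {z : ℂ | ¬ f0 z = 0} := by
    intro z hz
    have hne : S.Nonempty := ⟨1, by simp [hS]⟩
    have hpos : 0 < Metric.infDist z S :=
      (Metric.isClosed_sphere.notMem_iff_infDist_pos hne).mp hz
    exact ne_of_gt (lt_min hpos one_pos)
  rw [MeasureTheory.ae_iff]
  exact MeasureTheory.measure_mono_null hsub (MeasureTheory.ae_iff.mp hae)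

end RPaux

/-- Assume each `Θ_j` has no zeros on the unit circle, and
let `κ` be the weak limit of the Riesz-product measures
`∏_{j=1}^N (1/m_j)|Θ_j|² dż`.  Then for `0 ≤ p, q < h_k`,
`⟨ z^p / ∏_{j=1}^k Θ_j , z^q / ∏_{j=1}^k Θ_j ⟩_{L²(S¹, dκ)}`
equals `∏_{j=1}^k m_j^{-1}` if `p = q` and `0` otherwise; i.e. the suitably
normalized functions form an orthonormal system in `L²(S¹, dκ)`. -/
theorem inner_product_in_L2_kappa (m : ℕ → ℕ) (a : ℕ → ℕ → ℕ)
    (hm : ∀ j, 1 ≤ j → 2 ≤ m j) (ha : ∀ j i, 1 ≤ a j i)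
    (hΘ : ∀ j z, ‖z‖ = 1 → ThetaC m a j z ≠ 0)
    (κ : Measure ℂ) (hκprob : IsProbabilityMeasure κ)
    (hκ : ∀ f : BoundedContinuousFunction ℂ ℝ,
      Tendsto
        (fun N => ∫ z, f z ∂(circleMeasure.withDensity
          (fun z => ENNReal.ofReal ((∏ j ∈ Finset.Icc 1 N, TTj m a j z).re))))
        atTop (𝓝 (∫ z, f z ∂κ)))
    (k : ℕ) (p q : ℕ) (hp : p < hgt m a k) (hq : q < hgt m a k) :
    ∫ z, (z ^ p / ∏ j ∈ Finset.Icc 1 k, ThetaC m a j z) *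
        (starRingEnd ℂ) (z ^ q / ∏ j ∈ Finset.Icc 1 k, ThetaC m a j z) ∂κ
      = if p = q then ∏ j ∈ Finset.Icc 1 k, (m j : ℂ)⁻¹ else 0 := by
  classical
  haveI := hκprob
  set G := RPaux.GG m a k p q with hG
  have hGc : Continuous G := RPaux.GG_cont m a hΘ k p q
  obtain ⟨C, hC0, hCb⟩ := RPaux.GG_bound m a hΘ k p q
  have hGb : ∀ z, ‖G z‖ ≤ C := fun z =>
    (hCb z).trans (mul_le_of_le_one_left hC0 (min_le_right _ _))
  set c : ℂ := if p = q then ∏ j ∈ Finset.Icc 1 k, (m j : ℂ)⁻¹ else 0 with hc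
  -- bounded continuous real and imaginary parts
  have hreC : Continuous fun z : ℂ => (G z).re := Complex.continuous_re.comp hGc
  have himC : Continuous fun z : ℂ => (G z).im := Complex.continuous_im.comp hGc
  have hrebd : ∀ z : ℂ, ‖(G z).re‖ ≤ C := fun z => by
    rw [Real.norm_eq_abs]
    exact (Complex.abs_re_le_norm (G z)).trans (hGb z)
  have himbd : ∀ z : ℂ, ‖(G z).im‖ ≤ C := fun z => by
    rw [Real.norm_eq_abs]
    exact (Complex.abs_im_le_norm (G z)).trans (hGb z)
  set Fre := BoundedContinuousFunction.ofNormedAddCommGroup _ hreC C hrebd with hFre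
  set Fim := BoundedContinuousFunction.ofNormedAddCommGroup _ himC C himbd with hFim
  have hFrecoe : ⇑Fre = fun z : ℂ => (G z).re := rfl
  have hFimcoe : ⇑Fim = fun z : ℂ => (G z).im := rfl
  -- integrals of the real/imaginary parts against the Riesz products, for N ≥ k
  have hDGint : ∀ N : ℕ, IntegrableOn
      (fun t : ℝ => (∏ j ∈ Finset.Icc 1 N,
        (Complex.normSq (ThetaC m a j (RPaux.cexp2 t)) / m j)) • G (RPaux.cexp2 t))
      (Set.Ico (0 : ℝ) 1) := by
    intro N
    have hcont : Continuous (fun t : ℝ => (∏ j ∈ Finset.Icc 1 N,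
        (Complex.normSq (ThetaC m a j (RPaux.cexp2 t)) / m j)) • G (RPaux.cexp2 t)) :=
      ((RPaux.contD m a _).comp (RPaux.cont_cexp2)).smul (hGc.comp (RPaux.cont_cexp2))
    exact hcont.integrableOn_Icc.mono_set Set.Ico_subset_Icc_self
  have hJt : ∀ N : ℕ, k ≤ N → (∫ t in Set.Ico (0 : ℝ) 1,
      (∏ j ∈ Finset.Icc 1 N, (Complex.normSq (ThetaC m a j (RPaux.cexp2 t)) / m j)) •
        G (RPaux.cexp2 t)) = c := by
    intro N hN
    rw [← RPaux.chain m a N G hGc]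
    exact RPaux.main_int m a hm ha hΘ k p q hp hq N hN
  have hreint : ∀ N : ℕ, k ≤ N → (∫ z, Fre z ∂(circleMeasure.withDensity
      (fun z => ENNReal.ofReal ((∏ j ∈ Finset.Icc 1 N, TTj m a j z).re)))) = c.re := by
    intro N hN
    rw [hFrecoe, RPaux.chain m a N _ hreC]
    have hpt : ∀ t : ℝ, (∏ j ∈ Finset.Icc 1 N,
        (Complex.normSq (ThetaC m a j (RPaux.cexp2 t)) / m j)) • (G (RPaux.cexp2 t)).re =
        Complex.reCLM ((∏ j ∈ Finset.Icc 1 N,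
          (Complex.normSq (ThetaC m a j (RPaux.cexp2 t)) / m j)) • G (RPaux.cexp2 t)) := by
      intro t
      rw [_root_.map_smul]
      rfl
    rw [MeasureTheory.integral_congr_ae (Filter.Eventually.of_forall hpt),
      ContinuousLinearMap.integral_comp_comm _ (hDGint N), hJt N hN]
    rfl
  have himint : ∀ N : ℕ, k ≤ N → (∫ z, Fim z ∂(circleMeasure.withDensity
      (fun z => ENNReal.ofReal ((∏ j ∈ Finset.Icc 1 N, TTj m a j z).re)))) = c.im := by
    intro N hN
    rw [hFimcoe, RPaux.chain m a N _ himC]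
    have hpt : ∀ t : ℝ, (∏ j ∈ Finset.Icc 1 N,
        (Complex.normSq (ThetaC m a j (RPaux.cexp2 t)) / m j)) • (G (RPaux.cexp2 t)).im =
        Complex.imCLM ((∏ j ∈ Finset.Icc 1 N,
          (Complex.normSq (ThetaC m a j (RPaux.cexp2 t)) / m j)) • G (RPaux.cexp2 t)) := by
      intro t
      rw [_root_.map_smul]
      rfl
    rw [MeasureTheory.integral_congr_ae (Filter.Eventually.of_forall hpt),
      ContinuousLinearMap.integral_comp_comm _ (hDGint N), hJt N hN]
    rfl
  -- pass to the limit
  have hre : (∫ z, Fre z ∂κ) = c.re := by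
    refine tendsto_nhds_unique (hκ Fre) (Tendsto.congr' ?_ tendsto_const_nhds)
    filter_upwards [eventually_ge_atTop k] with N hN
    exact (hreint N hN).symm
  have him : (∫ z, Fim z ∂κ) = c.im := by
    refine tendsto_nhds_unique (hκ Fim) (Tendsto.congr' ?_ tendsto_const_nhds)
    filter_upwards [eventually_ge_atTop k] with N hN
    exact (himint N hN).symm
  -- identify the integral of G against κ
  have hGκint : Integrable G κ :=
    Integrable.mono' (integrable_const C) hGc.aestronglyMeasurable
      (Filter.Eventually.of_forall hGb)
  have hGκ : (∫ z, G z ∂κ) = c := by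
    apply Complex.ext
    · rw [← Complex.reCLM_apply, ← ContinuousLinearMap.integral_comp_comm _ hGκint]
      rw [show (fun z => Complex.reCLM (G z)) = ⇑Fre from rfl]
      rw [hre]
    · rw [← Complex.imCLM_apply, ← ContinuousLinearMap.integral_comp_comm _ hGκint]
      rw [show (fun z => Complex.imCLM (G z)) = ⇑Fim from rfl]
      rw [him]
  -- the integrand agrees with G almost everywhere
  have hae := RPaux.sphere_ae m a κ hκ
  have hcongr : (∫ z, (z ^ p / ∏ j ∈ Finset.Icc 1 k, ThetaC m a j z) *
      (starRingEnd ℂ) (z ^ q / ∏ j ∈ Finset.Icc 1 k, ThetaC m a j z) ∂κ) =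
      ∫ z, G z ∂κ := by
    refine MeasureTheory.integral_congr_ae ?_
    filter_upwards [hae] with z hz
    have hz1 : ‖z‖ = 1 := mem_sphere_zero_iff_norm.mp hz
    rw [hG, RPaux.GG_sphere m a k p q z hz1]
    rfl
  rw [hcongr, hGκ]
end
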